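/- arXiv:1309.4517 — 4 statements merged into one kernel-verified Lean document; each statement's English description precedes it below -/
import Mathlib

section
/- Let 𝔄 be an abelian category and let 𝔄^Π be the category of functors from the poset Π = {(a,b) ∈ ℤ² : a ≤ b} (with (a,b) ≤ (a',b') iff a ≥ a', b ≥ b') to 𝔄. Then the full subcategory 𝔄^Π_a of admissible objects — those E^{•,•} such that for all a ≤ b ≤ c the sequence 0 → E^{b,c} → E^{a,c} → E^{a,b} → 0 is short exact — is closed under extensions in 𝔄^Π: if 0 → E' → E → E'' → 0 is a short exact sequence in 𝔄^Π (i.e., pointwise short exact) with E' and E'' admissible, then E is admissible. -/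
open CategoryTheory CategoryTheory.Limits

universe v u

/-- `Π = {(a,b) ∈ ℤ² : a ≤ b}` with the reverse componentwise order. -/
structure PiSet : Type where
  a : ℤ
  b : ℤ
  le_ab : a ≤ b

instance : PartialOrder PiSet where
  le x y := y.a ≤ x.a ∧ y.b ≤ x.b
  le_refl x := ⟨le_refl _, le_refl _⟩
  le_trans x y z h h' := ⟨h'.1.trans h.1, h'.2.trans h.2⟩
  le_antisymm x y h h' := by
    cases x; cases y
    simp only [PiSet.mk.injEq]
    exact ⟨le_antisymm h'.1 h.1, le_antisymm h'.2 h.2⟩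

variable {𝔄 : Type u} [Category.{v} 𝔄] [Abelian 𝔄]

/-- An object `E` of `𝔄^Π` is *admissible* if for all `a ≤ b ≤ c` the sequence
`0 → E^{b,c} → E^{a,c} → E^{a,b} → 0` (given by the transition maps) is short exact. -/
def Admissible (E : PiSet ⥤ 𝔄) : Prop :=
  ∀ (a b c : ℤ) (hab : a ≤ b) (hbc : b ≤ c),
    ∃ w : E.map (homOfLE (show (⟨b, c, hbc⟩ : PiSet) ≤ ⟨a, c, hab.trans hbc⟩ from
            ⟨hab, le_refl c⟩)) ≫
          E.map (homOfLE (show (⟨a, c, hab.trans hbc⟩ : PiSet) ≤ ⟨a, b, hab⟩ from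
            ⟨le_refl a, hbc⟩)) = 0,
      (ShortComplex.mk _ _ w).ShortExact

/-- Middle row of the nine lemma: in a 3×3 commutative diagram with short exact
columns and short exact top and bottom rows, the middle row is short exact. -/
lemma nine_middle {A₁ A₂ A₃ B₁ B₂ B₃ C₁ C₂ C₃ : 𝔄}
    {f' : A₁ ⟶ A₂} {g' : A₂ ⟶ A₃} {f : B₁ ⟶ B₂} {g : B₂ ⟶ B₃}
    {f'' : C₁ ⟶ C₂} {g'' : C₂ ⟶ C₃}
    {α₁ : A₁ ⟶ B₁} {α₂ : A₂ ⟶ B₂} {α₃ : A₃ ⟶ B₃}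
    {β₁ : B₁ ⟶ C₁} {β₂ : B₂ ⟶ C₂} {β₃ : B₃ ⟶ C₃}
    (cf : α₁ ≫ f = f' ≫ α₂) (cg : α₂ ≫ g = g' ≫ α₃)
    (cf' : f ≫ β₂ = β₁ ≫ f'') (cg' : g ≫ β₃ = β₂ ≫ g'')
    {wA : f' ≫ g' = 0} (wB : f ≫ g = 0) {wC : f'' ≫ g'' = 0}
    {w₁ : α₁ ≫ β₁ = 0} {w₂ : α₂ ≫ β₂ = 0} {w₃ : α₃ ≫ β₃ = 0}
    (hA : (ShortComplex.mk f' g' wA).ShortExact)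
    (hC : (ShortComplex.mk f'' g'' wC).ShortExact)
    (h₁ : (ShortComplex.mk α₁ β₁ w₁).ShortExact)
    (h₂ : (ShortComplex.mk α₂ β₂ w₂).ShortExact)
    (h₃ : (ShortComplex.mk α₃ β₃ w₃).ShortExact) :
    (ShortComplex.mk f g wB).ShortExact := by
  open CategoryTheory.Preadditive Category in
  have mf' : Mono f' := hA.mono_f
  have eg' : Epi g' := hA.epi_g
  have mf'' : Mono f'' := hC.mono_f
  have eg'' : Epi g'' := hC.epi_g
  have mα₂ : Mono α₂ := h₂.mono_f
  have mα₃ : Mono α₃ := h₃.mono_f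
  have eβ₁ : Epi β₁ := h₁.epi_g
  have eβ₂ : Epi β₂ := h₂.epi_g
  have mono_f : Mono f := by
    apply Preadditive.mono_of_cancel_zero
    intro T x hx
    have h1 : x ≫ β₁ = 0 := by
      apply zero_of_comp_mono f''
      rw [Category.assoc, ← cf', ← Category.assoc, hx, zero_comp]
    obtain ⟨T', π, hπ, a, ha⟩ := h₁.exact.exact_up_to_refinements x h1
    have ha : π ≫ x = a ≫ α₁ := ha
    have ha' : a ≫ f' = 0 := by
      apply zero_of_comp_mono α₂
      rw [Category.assoc, ← cf, ← Category.assoc, ← ha, Category.assoc, hx, comp_zero]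
    have : a = 0 := zero_of_comp_mono f' ha'
    rw [this, zero_comp] at ha
    exact zero_of_epi_comp π ha
  have epi_g : Epi g := by
    rw [epi_iff_surjective_up_to_refinements]
    intro T y
    obtain ⟨T₁, π₁, hπ₁, c, hc⟩ := surjective_up_to_refinements_of_epi g'' (y ≫ β₃)
    obtain ⟨T₂, π₂, hπ₂, b, hb⟩ := surjective_up_to_refinements_of_epi β₂ c
    have key : (π₂ ≫ π₁ ≫ y - b ≫ g) ≫ β₃ = 0 := by
      simp only [Preadditive.sub_comp, Category.assoc]
      rw [sub_eq_zero, hc, reassoc_of% hb, cg']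
    obtain ⟨T₃, π₃, hπ₃, a₃, ha₃⟩ := h₃.exact.exact_up_to_refinements _ key
    have ha₃ : π₃ ≫ (π₂ ≫ π₁ ≫ y - b ≫ g) = a₃ ≫ α₃ := ha₃
    obtain ⟨T₄, π₄, hπ₄, a₂, ha₂⟩ := surjective_up_to_refinements_of_epi g' a₃
    refine ⟨T₄, π₄ ≫ π₃ ≫ π₂ ≫ π₁, inferInstance, π₄ ≫ π₃ ≫ b + a₂ ≫ α₂, ?_⟩
    show (π₄ ≫ π₃ ≫ π₂ ≫ π₁) ≫ y = (π₄ ≫ π₃ ≫ b + a₂ ≫ α₂) ≫ g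
    simp only [Preadditive.add_comp, Category.assoc]
    rw [cg, ← reassoc_of% ha₂, ← ha₃]
    simp only [Preadditive.comp_sub, Category.assoc]
    abel
  have hexact : (ShortComplex.mk f g wB).Exact := by
    rw [ShortComplex.exact_iff_exact_up_to_refinements]
    intro T x hx
    have hx : x ≫ g = 0 := hx
    have h1 : (x ≫ β₂) ≫ g'' = 0 := by
      rw [Category.assoc, ← cg', ← Category.assoc, hx, zero_comp]
    obtain ⟨T₁, π₁, hπ₁, c₁, hc₁⟩ := hC.exact.exact_up_to_refinements _ h1
    have hc₁ : π₁ ≫ x ≫ β₂ = c₁ ≫ f'' := hc₁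
    obtain ⟨T₂, π₂, hπ₂, b₁, hb₁⟩ := surjective_up_to_refinements_of_epi β₁ c₁
    have key : (π₂ ≫ π₁ ≫ x - b₁ ≫ f) ≫ β₂ = 0 := by
      simp only [Preadditive.sub_comp, Category.assoc]
      rw [sub_eq_zero, hc₁, reassoc_of% hb₁, cf']
    obtain ⟨T₃, π₃, hπ₃, a₂, ha₂⟩ := h₂.exact.exact_up_to_refinements _ key
    have ha₂ : π₃ ≫ (π₂ ≫ π₁ ≫ x - b₁ ≫ f) = a₂ ≫ α₂ := ha₂
    have hg : (a₂ ≫ g') ≫ α₃ = 0 := by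
      rw [Category.assoc, ← cg, ← Category.assoc, ← ha₂]
      simp only [Preadditive.comp_sub, Preadditive.sub_comp, Category.assoc, hx, wB,
        comp_zero, sub_zero, sub_self]
    have hg' : a₂ ≫ g' = 0 := zero_of_comp_mono α₃ hg
    obtain ⟨T₄, π₄, hπ₄, a₁, ha₁⟩ := hA.exact.exact_up_to_refinements _ hg'
    have ha₁ : π₄ ≫ a₂ = a₁ ≫ f' := ha₁
    refine ⟨T₄, π₄ ≫ π₃ ≫ π₂ ≫ π₁, inferInstance, π₄ ≫ π₃ ≫ b₁ + a₁ ≫ α₁, ?_⟩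
    show (π₄ ≫ π₃ ≫ π₂ ≫ π₁) ≫ x = (π₄ ≫ π₃ ≫ b₁ + a₁ ≫ α₁) ≫ f
    simp only [Preadditive.add_comp, Category.assoc]
    rw [cf, ← reassoc_of% ha₁, ← ha₂]
    simp only [Preadditive.comp_sub, Category.assoc]
    abel
  exact ShortComplex.ShortExact.mk hexact

/-- For an admissible `E'`, the object `E'^{b,b}` is zero (its identity vanishes). -/
lemma admissible_id_zero (E' : PiSet ⥤ 𝔄) (hE' : Admissible E') (b : ℤ) :
    𝟙 (E'.obj ⟨b, b, le_refl b⟩) = 0 := by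
  obtain ⟨w, -⟩ := hE' b b b (le_refl b) (le_refl b)
  rw [← Functor.map_comp, Subsingleton.elim (_ ≫ _)
    (𝟙 (⟨b, b, le_refl b⟩ : PiSet)), CategoryTheory.Functor.map_id] at w
  exact w

/-- The admissible objects form an extension-closed subcategory of `𝔄^Π`:
if `0 → E' → E → E'' → 0` is a (pointwise) short exact sequence of `Π`-diagrams
with `E'` and `E''` admissible, then `E` is admissible. -/
theorem admissible_extension_closed (E' E E'' : PiSet ⥤ 𝔄)
    (η : E' ⟶ E) (θ : E ⟶ E'')
    (hw : ∀ x : PiSet, η.app x ≫ θ.app x = 0)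
    (hses : ∀ x : PiSet, (ShortComplex.mk (η.app x) (θ.app x) (hw x)).ShortExact)
    (hE' : Admissible E') (hE'' : Admissible E'') :
    Admissible E := by
  intro a b c hab hbc
  -- `E^{b,b}` is zero since `E'^{b,b}` and `E''^{b,b}` are
  have hidE : 𝟙 (E.obj ⟨b, b, le_refl b⟩) = 0 := by
    have h' := admissible_id_zero E' hE' b
    have h'' := admissible_id_zero E'' hE'' b
    have hθ : θ.app ⟨b, b, le_refl b⟩ = 0 := by
      rw [← Category.comp_id (θ.app _), h'', Limits.comp_zero]
    have hη : η.app ⟨b, b, le_refl b⟩ = 0 := by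
      rw [← Category.id_comp (η.app _), h', Limits.zero_comp]
    obtain ⟨T, π, hπ, u, hu⟩ := (hses ⟨b, b, le_refl b⟩).exact.exact_up_to_refinements
      (𝟙 (E.obj ⟨b, b, le_refl b⟩))
      (show 𝟙 (E.obj ⟨b, b, le_refl b⟩) ≫ θ.app ⟨b, b, le_refl b⟩ = 0 by
        rw [Category.id_comp, hθ])
    have hu2 : π ≫ 𝟙 (E.obj ⟨b, b, le_refl b⟩) =
        (show T ⟶ E'.obj ⟨b, b, le_refl b⟩ from u) ≫ η.app ⟨b, b, le_refl b⟩ := hu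
    have hπ0 : π ≫ 𝟙 (E.obj ⟨b, b, le_refl b⟩) = 0 := by
      rw [hu2, hη, Limits.comp_zero]
    exact zero_of_epi_comp π hπ0
  set x₃ : PiSet := ⟨b, c, hbc⟩ with hx₃
  set x₂ : PiSet := ⟨a, c, hab.trans hbc⟩ with hx₂
  set x₁ : PiSet := ⟨a, b, hab⟩ with hx₁
  have huv : (homOfLE (show x₃ ≤ x₂ from ⟨hab, le_refl c⟩)) ≫
      (homOfLE (show x₂ ≤ x₁ from ⟨le_refl a, hbc⟩)) =
      (homOfLE (show x₃ ≤ ⟨b, b, le_refl b⟩ from ⟨le_refl b, hbc⟩)) ≫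
      (homOfLE (show (⟨b, b, le_refl b⟩ : PiSet) ≤ x₁ from ⟨hab, le_refl b⟩)) :=
    Subsingleton.elim _ _
  have hmap0 : E.map (homOfLE (show (⟨b, b, le_refl b⟩ : PiSet) ≤ x₁ from
      ⟨hab, le_refl b⟩)) = 0 := by
    rw [← Category.id_comp (E.map _), hidE, Limits.zero_comp]
  have wE : E.map (homOfLE (show x₃ ≤ x₂ from ⟨hab, le_refl c⟩)) ≫
      E.map (homOfLE (show x₂ ≤ x₁ from ⟨le_refl a, hbc⟩)) = 0 := by
    rw [← Functor.map_comp, huv, Functor.map_comp, hmap0, Limits.comp_zero]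
  obtain ⟨w', hA⟩ := hE' a b c hab hbc
  obtain ⟨w'', hC⟩ := hE'' a b c hab hbc
  exact ⟨wE, nine_middle
    (η.naturality (homOfLE ⟨hab, le_refl c⟩)).symm
    (η.naturality (homOfLE ⟨le_refl a, hbc⟩)).symm
    (θ.naturality (homOfLE ⟨hab, le_refl c⟩))
    (θ.naturality (homOfLE ⟨le_refl a, hbc⟩))
    wE hA hC (hses x₃) (hses x₂) (hses x₁)⟩
end

section
/- Let 𝔄 be an abelian category and let N(𝔄) be the full subcategory of 𝔄^Π consisting of objects E^{•,•} whose image in the localization S⁻¹𝔄^Π is zero, where S is the class of canonical morphisms φ̃(E^{•,•}) → ψ̃(E^{•,•}) for φ ≥ ψ in M. Then N(𝔄) is a Serre subcategory of 𝔄^Π, i.e., it is closed under subobjects, quotients, and extensions. -/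
open CategoryTheory CategoryTheory.Limits

universe v u

variable {𝔄 : Type u} [Category.{v} 𝔄] [Abelian 𝔄]

/-- `M`: order-preserving maps `ℤ → ℤ` tending to `±∞` at `±∞`. -/
def inM (φ : ℤ → ℤ) : Prop :=
  Monotone φ ∧ Filter.Tendsto φ Filter.atTop Filter.atTop ∧
    Filter.Tendsto φ Filter.atBot Filter.atBot

/-- The diagram `φ̃(E)` with `φ̃(E)^{a,b} = E^{φ(a),φ(b)}`. -/
def tilde (φ : ℤ → ℤ) (hφ : Monotone φ) (E : PiSet ⥤ 𝔄) : PiSet ⥤ 𝔄 where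
  obj p := E.obj ⟨φ p.a, φ p.b, hφ p.le_ab⟩
  map {p q} h := E.map (homOfLE ⟨hφ (leOfHom h).1, hφ (leOfHom h).2⟩)
  map_id p := by
    rw [← E.map_id]
    exact congrArg E.map (Subsingleton.elim _ _)
  map_comp f g := by
    rw [← E.map_comp]
    exact congrArg E.map (Subsingleton.elim _ _)

/-- The canonical morphism `φ̃(E) → ψ̃(E)` for `φ ≥ ψ` pointwise, given by transition maps. -/
def canMap (φ ψ : ℤ → ℤ) (hφ : Monotone φ) (hψ : Monotone ψ) (h : ∀ i, ψ i ≤ φ i)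
    (E : PiSet ⥤ 𝔄) : tilde φ hφ E ⟶ tilde ψ hψ E where
  app p := E.map (homOfLE ⟨h _, h _⟩)
  naturality p q f := by
    dsimp [tilde]
    rw [← E.map_comp, ← E.map_comp]
    exact congrArg E.map (Subsingleton.elim _ _)

/-- The class `S` of canonical morphisms `φ̃(E) → ψ̃(E)` for `φ ≥ ψ` in `M`. -/
def Scl : MorphismProperty (PiSet ⥤ 𝔄) := fun X Y f =>
  ∃ (E : PiSet ⥤ 𝔄) (φ ψ : ℤ → ℤ) (hφ : inM φ) (hψ : inM ψ) (h : ∀ i, ψ i ≤ φ i)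
    (hX : X = tilde φ hφ.1 E) (hY : Y = tilde ψ hψ.1 E),
    f = eqToHom hX ≫ canMap φ ψ hφ.1 hψ.1 h E ≫ eqToHom hY.symm

/-- `N(𝔄)`: the objects of `𝔄^Π` which become zero in the localization `S⁻¹𝔄^Π`. -/
def Nsub (E : PiSet ⥤ 𝔄) : Prop :=
  CategoryTheory.Limits.IsZero ((Scl (𝔄 := 𝔄)).Q.obj E)

set_option linter.unusedSectionVars false
set_option linter.unusedVariables false
set_option maxHeartbeats 1000000

theorem map_eqq (E : PiSet ⥤ 𝔄) {p q : PiSet} (h h' : p ⟶ q) : E.map h = E.map h' :=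
  congrArg E.map (Subsingleton.elim h h')

theorem map_self (E : PiSet ⥤ 𝔄) {p : PiSet} (h : p ⟶ p) : E.map h = 𝟙 (E.obj p) := by
  rw [← E.map_id]; exact map_eqq E _ _

theorem inM_id : inM (id : ℤ → ℤ) :=
  ⟨monotone_id, Filter.tendsto_id, Filter.tendsto_id⟩

theorem inM_comp {φ ψ : ℤ → ℤ} (hφ : inM φ) (hψ : inM ψ) : inM (fun i => φ (ψ i)) :=
  ⟨hφ.1.comp hψ.1, hφ.2.1.comp hψ.2.1, hφ.2.2.comp hψ.2.2⟩

theorem inM_max {φ ψ : ℤ → ℤ} (hφ : inM φ) (hψ : inM ψ) : inM (fun i => max (φ i) (ψ i)) := by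
  refine ⟨hφ.1.max hψ.1, Filter.tendsto_atTop_mono (fun i => le_max_left _ _) hφ.2.1, ?_⟩
  rw [Filter.tendsto_atBot]
  intro b
  filter_upwards [Filter.tendsto_atBot.mp hφ.2.2 b, Filter.tendsto_atBot.mp hψ.2.2 b] with i h1 h2
  exact max_le h1 h2

def tildeMap (φ : ℤ → ℤ) (hφ : Monotone φ) {A B : PiSet ⥤ 𝔄} (f : A ⟶ B) :
    tilde φ hφ A ⟶ tilde φ hφ B where
  app p := f.app ⟨φ p.a, φ p.b, hφ p.le_ab⟩
  naturality p q m := f.naturality (homOfLE ⟨hφ (leOfHom m).1, hφ (leOfHom m).2⟩)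

def toId (φ : ℤ → ℤ) (hφ : Monotone φ) (h : ∀ i, i ≤ φ i) (E : PiSet ⥤ 𝔄) :
    tilde φ hφ E ⟶ E where
  app p := E.map (homOfLE (show (⟨φ p.a, φ p.b, hφ p.le_ab⟩ : PiSet) ≤ p from ⟨h _, h _⟩))
  naturality p q m := by
    dsimp [tilde]
    rw [← E.map_comp, ← E.map_comp]
    exact map_eqq E _ _

def idTrans (E : PiSet ⥤ 𝔄) : tilde id inM_id.1 E ⟶ E :=
  toId id inM_id.1 (fun i => le_refl i) E

/-- The property characterizing `Nsub`. -/
def PP (E : PiSet ⥤ 𝔄) : Prop :=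
  ∃ (φ : ℤ → ℤ) (hφ : inM φ) (h : ∀ i, i ≤ φ i), toId φ hφ.1 h E = 0

theorem toId_natural (φ : ℤ → ℤ) (hφ : Monotone φ) (h : ∀ i, i ≤ φ i) {A B : PiSet ⥤ 𝔄}
    (f : A ⟶ B) : tildeMap φ hφ f ≫ toId φ hφ h B = toId φ hφ h A ≫ f := by
  ext p
  exact (f.naturality (homOfLE ⟨h _, h _⟩)).symm

/-- Closure of `PP` under subobjects. -/
theorem PP_mono {A B : PiSet ⥤ 𝔄} (f : A ⟶ B) (hf : Mono f) (hB : PP B) : PP A := by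
  obtain ⟨φ, hφ, h, hz⟩ := hB
  refine ⟨φ, hφ, h, ?_⟩
  have : toId φ hφ.1 h A ≫ f = 0 := by
    rw [← toId_natural, hz, comp_zero]
  rw [← cancel_mono f, this, zero_comp]

/-- Closure of `PP` under quotients. -/
theorem PP_epi {A B : PiSet ⥤ 𝔄} (f : A ⟶ B) (hf : Epi f) (hA : PP A) : PP B := by
  obtain ⟨φ, hφ, h, hz⟩ := hA
  refine ⟨φ, hφ, h, ?_⟩
  have he : Epi (tildeMap φ hφ.1 f) := by
    have : ∀ p, Epi ((tildeMap φ hφ.1 f).app p) := by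
      intro p
      have := (NatTrans.epi_iff_epi_app f).1 hf
      exact this _
    exact NatTrans.epi_of_epi_app _
  rw [← cancel_epi (tildeMap φ hφ.1 f), toId_natural, hz, zero_comp, comp_zero]

/-- Closure of `PP` under extensions. -/
theorem PP_ext (S : ShortComplex (PiSet ⥤ 𝔄)) (hS : S.ShortExact) (h1 : PP S.X₁)
    (h3 : PP S.X₃) : PP S.X₂ := by
  obtain ⟨φ₁, hφ₁, hle₁, hz₁⟩ := h1
  obtain ⟨φ₃, hφ₃, hle₃, hz₃⟩ := h3
  have := hS.mono_f
  refine ⟨fun i => φ₃ (φ₁ i), inM_comp hφ₃ hφ₁, fun i => (hle₁ i).trans (hle₃ (φ₁ i)), ?_⟩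
  obtain ⟨u, hu⟩ : ∃ u : tilde φ₃ hφ₃.1 S.X₂ ⟶ S.X₁, u ≫ S.f = toId φ₃ hφ₃.1 hle₃ S.X₂ := by
    refine hS.exact.lift' _ ?_
    rw [← toId_natural, hz₃, comp_zero]
  ext p
  have hn := u.naturality
    (homOfLE (show (⟨φ₁ p.a, φ₁ p.b, hφ₁.1 p.le_ab⟩ : PiSet) ≤ p from ⟨hle₁ _, hle₁ _⟩))
  have e1 : (toId (fun i => φ₃ (φ₁ i)) (inM_comp hφ₃ hφ₁).1
        (fun i => (hle₁ i).trans (hle₃ (φ₁ i))) S.X₂).app p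
      = (tilde φ₃ hφ₃.1 S.X₂).map
          (homOfLE (show (⟨φ₁ p.a, φ₁ p.b, hφ₁.1 p.le_ab⟩ : PiSet) ≤ p from ⟨hle₁ _, hle₁ _⟩))
        ≫ (toId φ₃ hφ₃.1 hle₃ S.X₂).app p := by
    dsimp [toId, tilde]
    rw [← S.X₂.map_comp]
    exact map_eqq _ _ _
  have hx1 : S.X₁.map
      (homOfLE (show (⟨φ₁ p.a, φ₁ p.b, hφ₁.1 p.le_ab⟩ : PiSet) ≤ p from ⟨hle₁ _, hle₁ _⟩)) = 0 := by
    have h0 := congr_app hz₁ p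
    dsimp [toId] at h0
    exact (map_eqq _ _ _).trans h0
  rw [zero_app, e1, ← hu]
  rw [NatTrans.comp_app, ← Category.assoc, hn, hx1, comp_zero, zero_comp]
  rfl

open ZeroObject in
theorem PP_zero : PP (0 : PiSet ⥤ 𝔄) :=
  ⟨id, inM_id, fun i => le_refl i, (isZero_zero _).eq_of_tgt _ _⟩

theorem tilde_id_eq (E : PiSet ⥤ 𝔄) : tilde id inM_id.1 E = E := by
  refine CategoryTheory.Functor.ext (fun p => rfl) ?_
  intro p q m
  erw [eqToHom_refl, eqToHom_refl, Category.comp_id, Category.id_comp]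
  exact map_eqq E _ _

theorem id_eq_zero_of_PP {E : PiSet ⥤ 𝔄} (hE : PP E) :
    𝟙 ((Scl (𝔄 := 𝔄)).Q.obj E) = (Scl (𝔄 := 𝔄)).Q.map (0 : E ⟶ E) := by
  obtain ⟨φ, hφ, h, hz⟩ := hE
  have hfS : Scl (eqToHom rfl ≫ canMap φ id hφ.1 inM_id.1 h E ≫ eqToHom (tilde_id_eq E)) :=
    ⟨E, φ, id, hφ, inM_id, h, rfl, (tilde_id_eq E).symm, rfl⟩
  have hc : canMap φ id hφ.1 inM_id.1 h E = 0 := by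
    ext p
    rw [zero_app]
    have h0 := congr_app hz p
    dsimp [toId] at h0
    dsimp [canMap]
    exact (map_eqq _ _ _).trans h0
  have hf0 : (eqToHom rfl ≫ canMap φ id hφ.1 inM_id.1 h E ≫ eqToHom (tilde_id_eq E))
      = (0 : tilde φ hφ.1 E ⟶ E) := by
    rw [hc]
    simp
  have hiso := (Scl (𝔄 := 𝔄)).Q_inverts _ hfS
  rw [hf0] at hiso
  have h1 : (Scl (𝔄 := 𝔄)).Q.map (0 : tilde φ hφ.1 E ⟶ E) ≫ (Scl (𝔄 := 𝔄)).Q.map (𝟙 E)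
      = (Scl (𝔄 := 𝔄)).Q.map (0 : tilde φ hφ.1 E ⟶ E) ≫ (Scl (𝔄 := 𝔄)).Q.map (0 : E ⟶ E) := by
    rw [← Functor.map_comp, ← Functor.map_comp, Category.comp_id, comp_zero]
  have h2 := (cancel_epi ((Scl (𝔄 := 𝔄)).Q.map (0 : tilde φ hφ.1 E ⟶ E))).1 h1
  rw [← h2, CategoryTheory.Functor.map_id]

theorem isZero_of_retract {D' : Type*} [Category D'] {X M : D'} (hM : IsZero M) (i : X ⟶ M)
    (r : M ⟶ X) (hir : i ≫ r = 𝟙 X) : IsZero X := by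
  constructor
  · intro Y
    refine ⟨⟨⟨i ≫ hM.to_ Y⟩, fun g => ?_⟩⟩
    calc g = (i ≫ r) ≫ g := by rw [hir, Category.id_comp]
    _ = i ≫ (r ≫ g) := by rw [Category.assoc]
    _ = i ≫ hM.to_ Y := by rw [hM.eq_of_src (r ≫ g) (hM.to_ Y)]
  · intro Y
    refine ⟨⟨⟨hM.from_ Y ≫ r⟩, fun g => ?_⟩⟩
    calc g = g ≫ (i ≫ r) := by rw [hir, Category.comp_id]
    _ = (g ≫ i) ≫ r := by rw [Category.assoc]
    _ = hM.from_ Y ≫ r := by rw [hM.eq_of_tgt (g ≫ i) (hM.from_ Y)]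

open ZeroObject in
theorem isZero_Q_zero : IsZero ((Scl (𝔄 := 𝔄)).Q.obj (0 : PiSet ⥤ 𝔄)) := by
  have h0 := id_eq_zero_of_PP (PP_zero (𝔄 := 𝔄))
  let τ : (Scl (𝔄 := 𝔄)).Q ⋙ (Functor.const _).obj ((Scl (𝔄 := 𝔄)).Q.obj 0) ⟶
      (Scl (𝔄 := 𝔄)).Q ⋙ 𝟭 _ :=
    { app := fun X => (Scl (𝔄 := 𝔄)).Q.map (0 : (0 : PiSet ⥤ 𝔄) ⟶ X)
      naturality := fun X Y f => by
        dsimp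
        rw [Category.id_comp, ← Functor.map_comp, zero_comp] }
  let θ := Localization.Construction.natTransExtension τ
  have hθ : ∀ (X : PiSet ⥤ 𝔄), θ.app ((Scl (𝔄 := 𝔄)).Q.obj X)
      = (Scl (𝔄 := 𝔄)).Q.map (0 : (0 : PiSet ⥤ 𝔄) ⟶ X) := fun X => by
    simp only [θ, Localization.Construction.natTransExtension_app,
      Localization.Construction.NatTransExtension.app_eq]
    rfl
  let τ' : (Scl (𝔄 := 𝔄)).Q ⋙ 𝟭 _ ⟶
      (Scl (𝔄 := 𝔄)).Q ⋙ (Functor.const _).obj ((Scl (𝔄 := 𝔄)).Q.obj 0) :=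
    { app := fun X => (Scl (𝔄 := 𝔄)).Q.map (0 : X ⟶ (0 : PiSet ⥤ 𝔄))
      naturality := fun X Y f => by
        dsimp
        rw [Category.comp_id, ← Functor.map_comp, comp_zero] }
  let θ' := Localization.Construction.natTransExtension τ'
  have hθ' : ∀ (X : PiSet ⥤ 𝔄), θ'.app ((Scl (𝔄 := 𝔄)).Q.obj X)
      = (Scl (𝔄 := 𝔄)).Q.map (0 : X ⟶ (0 : PiSet ⥤ 𝔄)) := fun X => by
    simp only [θ', Localization.Construction.natTransExtension_app,
      Localization.Construction.NatTransExtension.app_eq]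
    rfl
  constructor
  · intro Y
    refine ⟨⟨⟨θ.app Y⟩, fun g => ?_⟩⟩
    have hnat := θ.naturality g
    dsimp at hnat
    rw [Category.id_comp] at hnat
    show g = θ.app Y
    rw [hnat, hθ, ← h0, Category.id_comp]
  · intro Y
    refine ⟨⟨⟨θ'.app Y⟩, fun g => ?_⟩⟩
    have hnat := θ'.naturality g
    dsimp at hnat
    rw [Category.comp_id] at hnat
    show g = θ'.app Y
    rw [← hnat, hθ', ← h0, Category.comp_id]

open ZeroObject in
theorem Nsub_of_PP {E : PiSet ⥤ 𝔄} (hE : PP E) : Nsub E := by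
  refine isZero_of_retract isZero_Q_zero ((Scl (𝔄 := 𝔄)).Q.map (0 : E ⟶ 0))
    ((Scl (𝔄 := 𝔄)).Q.map (0 : (0 : PiSet ⥤ 𝔄) ⟶ E)) ?_
  rw [← Functor.map_comp, zero_comp, ← id_eq_zero_of_PP hE]

/-! ### Part B: the concrete model category -/

theorem canMap_trans {φ ψ ρ : ℤ → ℤ} (hφ : Monotone φ) (hψ : Monotone ψ) (hρ : Monotone ρ)
    (h₁ : ∀ i, ψ i ≤ φ i) (h₂ : ∀ i, ρ i ≤ ψ i) (E : PiSet ⥤ 𝔄) :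
    canMap φ ψ hφ hψ h₁ E ≫ canMap ψ ρ hψ hρ h₂ E
      = canMap φ ρ hφ hρ (fun i => (h₂ i).trans (h₁ i)) E := by
  ext p
  dsimp [canMap]
  refine (E.map_comp _ _).symm.trans ?_
  exact map_eqq _ _ _

def shiftHom {X Y : PiSet ⥤ 𝔄} (ψ : ℤ → ℤ) (hψ : Monotone ψ) {φ : ℤ → ℤ} {hφ : Monotone φ}
    (f : tilde φ hφ X ⟶ Y) : tilde (fun i => φ (ψ i)) (hφ.comp hψ) X ⟶ tilde ψ hψ Y where
  app p := f.app ⟨ψ p.a, ψ p.b, hψ p.le_ab⟩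
  naturality p q m := f.naturality
    (homOfLE (show (⟨ψ p.a, ψ p.b, hψ p.le_ab⟩ : PiSet) ≤ ⟨ψ q.a, ψ q.b, hψ q.le_ab⟩ from
      ⟨hψ (leOfHom m).1, hψ (leOfHom m).2⟩))

theorem shift_can {X Y : PiSet ⥤ 𝔄} (ψ : ℤ → ℤ) (hψ : Monotone ψ) {φ χ : ℤ → ℤ}
    {hφ : Monotone φ} (hχ : Monotone χ) (h : ∀ i, φ i ≤ χ i) (f : tilde φ hφ X ⟶ Y) :
    shiftHom ψ hψ (canMap χ φ hχ hφ h X ≫ f)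
      = canMap (fun i => χ (ψ i)) (fun i => φ (ψ i)) (hχ.comp hψ) (hφ.comp hψ)
          (fun i => h (ψ i)) X ≫ shiftHom ψ hψ f := by
  ext p
  dsimp [shiftHom, canMap]
  rfl

theorem shift_nat {X Y : PiSet ⥤ 𝔄} {φ ψ χ : ℤ → ℤ} {hφ : Monotone φ} (hψ : Monotone ψ)
    (hχ : Monotone χ) (h : ∀ i, ψ i ≤ χ i) (f : tilde φ hφ X ⟶ Y) :
    canMap (fun i => φ (χ i)) (fun i => φ (ψ i)) (hφ.comp hχ) (hφ.comp hψ)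
        (fun i => hφ (h i)) X ≫ shiftHom ψ hψ f
      = shiftHom χ hχ f ≫ canMap χ ψ hχ hψ h Y := by
  ext p
  exact f.naturality
    (homOfLE (show (⟨χ p.a, χ p.b, hχ p.le_ab⟩ : PiSet) ≤ ⟨ψ p.a, ψ p.b, hψ p.le_ab⟩ from
      ⟨h p.a, h p.b⟩))

structure DPre (X Y : PiSet ⥤ 𝔄) where
  φ : ℤ → ℤ
  hφ : inM φ
  f : tilde φ hφ.1 X ⟶ Y

def DRel {X Y : PiSet ⥤ 𝔄} (u v : DPre X Y) : Prop :=
  ∃ (χ : ℤ → ℤ) (hχ : inM χ) (h₁ : ∀ i, u.φ i ≤ χ i) (h₂ : ∀ i, v.φ i ≤ χ i),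
    canMap χ u.φ hχ.1 u.hφ.1 h₁ X ≫ u.f = canMap χ v.φ hχ.1 v.hφ.1 h₂ X ≫ v.f

theorem DRel_refl {X Y : PiSet ⥤ 𝔄} (u : DPre X Y) : DRel u u :=
  ⟨u.φ, u.hφ, fun i => le_refl _, fun i => le_refl _, rfl⟩

theorem DRel_symm {X Y : PiSet ⥤ 𝔄} {u v : DPre X Y} (h : DRel u v) : DRel v u := by
  obtain ⟨χ, hχ, h₁, h₂, e⟩ := h
  exact ⟨χ, hχ, h₂, h₁, e.symm⟩

theorem DRel_trans {X Y : PiSet ⥤ 𝔄} {u v w : DPre X Y} (h : DRel u v) (h' : DRel v w) :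
    DRel u w := by
  obtain ⟨χ₁, hχ₁, h₁, h₂, e₁⟩ := h
  obtain ⟨χ₂, hχ₂, h₃, h₄, e₂⟩ := h'
  refine ⟨fun i => max (χ₁ i) (χ₂ i), inM_max hχ₁ hχ₂,
    fun i => (h₁ i).trans (le_max_left _ _), fun i => (h₄ i).trans (le_max_right _ _), ?_⟩
  have a₁ : canMap (fun i => max (χ₁ i) (χ₂ i)) u.φ (inM_max hχ₁ hχ₂).1 u.hφ.1
      (fun i => (h₁ i).trans (le_max_left _ _)) X
      = canMap _ χ₁ (inM_max hχ₁ hχ₂).1 hχ₁.1 (fun i => le_max_left _ _) X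
        ≫ canMap χ₁ u.φ hχ₁.1 u.hφ.1 h₁ X := (canMap_trans _ _ _ _ _ _).symm
  have a₂ : canMap (fun i => max (χ₁ i) (χ₂ i)) v.φ (inM_max hχ₁ hχ₂).1 v.hφ.1
      (fun i => (h₂ i).trans (le_max_left _ _)) X
      = canMap _ χ₁ (inM_max hχ₁ hχ₂).1 hχ₁.1 (fun i => le_max_left _ _) X
        ≫ canMap χ₁ v.φ hχ₁.1 v.hφ.1 h₂ X := (canMap_trans _ _ _ _ _ _).symm
  have a₃ : canMap (fun i => max (χ₁ i) (χ₂ i)) v.φ (inM_max hχ₁ hχ₂).1 v.hφ.1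
      (fun i => (h₂ i).trans (le_max_left _ _)) X
      = canMap _ χ₂ (inM_max hχ₁ hχ₂).1 hχ₂.1 (fun i => le_max_right _ _) X
        ≫ canMap χ₂ v.φ hχ₂.1 v.hφ.1 h₃ X := (canMap_trans _ _ _ _ _ _).symm
  have a₄ : canMap (fun i => max (χ₁ i) (χ₂ i)) w.φ (inM_max hχ₁ hχ₂).1 w.hφ.1
      (fun i => (h₄ i).trans (le_max_right _ _)) X
      = canMap _ χ₂ (inM_max hχ₁ hχ₂).1 hχ₂.1 (fun i => le_max_right _ _) X
        ≫ canMap χ₂ w.φ hχ₂.1 w.hφ.1 h₄ X := (canMap_trans _ _ _ _ _ _).symm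
  calc canMap _ u.φ _ u.hφ.1 _ X ≫ u.f
      = _ ≫ canMap χ₁ u.φ hχ₁.1 u.hφ.1 h₁ X ≫ u.f := by rw [a₁, Category.assoc]
    _ = _ ≫ canMap χ₁ v.φ hχ₁.1 v.hφ.1 h₂ X ≫ v.f := by rw [e₁]
    _ = canMap _ v.φ (inM_max hχ₁ hχ₂).1 v.hφ.1 _ X ≫ v.f := by rw [← Category.assoc, ← a₂]
    _ = _ ≫ canMap χ₂ v.φ hχ₂.1 v.hφ.1 h₃ X ≫ v.f := by rw [a₃, Category.assoc]
    _ = _ ≫ canMap χ₂ w.φ hχ₂.1 w.hφ.1 h₄ X ≫ w.f := by rw [e₂]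
    _ = canMap _ w.φ (inM_max hχ₁ hχ₂).1 w.hφ.1 _ X ≫ w.f := by rw [← Category.assoc, ← a₄]

instance DSetoid (X Y : PiSet ⥤ 𝔄) : Setoid (DPre X Y) :=
  ⟨DRel, ⟨DRel_refl, DRel_symm, DRel_trans⟩⟩

def compPre {X Y Z : PiSet ⥤ 𝔄} (u : DPre X Y) (v : DPre Y Z) : DPre X Z :=
  ⟨fun i => u.φ (v.φ i), inM_comp u.hφ v.hφ, shiftHom v.φ v.hφ.1 u.f ≫ v.f⟩

theorem compPre_rel_left {X Y Z : PiSet ⥤ 𝔄} {u u' : DPre X Y} (v : DPre Y Z)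
    (h : DRel u u') : DRel (compPre u v) (compPre u' v) := by
  obtain ⟨χ, hχ, h₁, h₂, e⟩ := h
  refine ⟨fun i => χ (v.φ i), inM_comp hχ v.hφ, fun i => h₁ (v.φ i), fun i => h₂ (v.φ i), ?_⟩
  show canMap _ _ _ _ _ X ≫ shiftHom v.φ v.hφ.1 u.f ≫ v.f
    = canMap _ _ _ _ _ X ≫ shiftHom v.φ v.hφ.1 u'.f ≫ v.f
  rw [← Category.assoc, ← shift_can, e, shift_can, Category.assoc]
  exact hχ.1

theorem compPre_rel_right {X Y Z : PiSet ⥤ 𝔄} (u : DPre X Y) {v v' : DPre Y Z}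
    (h : DRel v v') : DRel (compPre u v) (compPre u v') := by
  obtain ⟨χ, hχ, h₁, h₂, e⟩ := h
  refine ⟨fun i => u.φ (χ i), inM_comp u.hφ hχ, fun i => u.hφ.1 (h₁ i),
    fun i => u.hφ.1 (h₂ i), ?_⟩
  show canMap _ _ _ _ _ X ≫ shiftHom v.φ v.hφ.1 u.f ≫ v.f
    = canMap _ _ _ _ _ X ≫ shiftHom v'.φ v'.hφ.1 u.f ≫ v'.f
  rw [← Category.assoc, shift_nat v.hφ.1 hχ.1 h₁, Category.assoc, e, ← Category.assoc,
    ← shift_nat v'.hφ.1 hχ.1 h₂, Category.assoc]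

structure DObj (𝔅 : Type u) [Category.{v} 𝔅] [Abelian 𝔅] where
  X : PiSet ⥤ 𝔅

instance : Category (DObj 𝔄) where
  Hom A B := Quotient (DSetoid A.X B.X)
  id A := ⟦⟨id, inM_id, idTrans A.X⟩⟧
  comp {A B C} := Quotient.lift₂ (fun u v => ⟦compPre u v⟧)
    (fun u v u' v' hu hv => Quotient.sound
      (DRel_trans (compPre_rel_right u hv) (compPre_rel_left v' hu)))
  id_comp {A B} g := by
    refine Quotient.inductionOn g (fun v => ?_)
    refine Quotient.sound ⟨v.φ, v.hφ, fun i => le_refl _, fun i => le_refl _, ?_⟩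
    ext p
    show A.X.map _ ≫ (idTrans A.X).app _ ≫ v.f.app p = A.X.map _ ≫ v.f.app p
    show A.X.map _ ≫ A.X.map _ ≫ v.f.app p = A.X.map _ ≫ v.f.app p
    refine (Functor.map_comp_assoc _ _ _ _).symm.trans ?_
    exact congrArg (· ≫ v.f.app p) (map_eqq _ _ _)
  comp_id {A B} g := by
    refine Quotient.inductionOn g (fun u => ?_)
    refine Quotient.sound ⟨u.φ, u.hφ, fun i => le_refl _, fun i => le_refl _, ?_⟩
    ext p
    show A.X.map _ ≫ u.f.app ⟨p.a, p.b, p.le_ab⟩ ≫ B.X.map _ = A.X.map _ ≫ u.f.app p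
    have : B.X.map (homOfLE (show (⟨p.a, p.b, p.le_ab⟩ : PiSet) ≤ p from
        ⟨le_refl _, le_refl _⟩)) = 𝟙 (B.X.obj p) := map_self _ _
    rw [this]
    refine (congrArg (fun x => _ ≫ x) (Category.comp_id _)).trans ?_
    rfl
  assoc {A B C D} g₁ g₂ g₃ := by
    refine Quotient.inductionOn₃ g₁ g₂ g₃ (fun u v w => ?_)
    refine Quotient.sound ⟨fun i => u.φ (v.φ (w.φ i)),
      inM_comp u.hφ (inM_comp v.hφ w.hφ), fun i => le_refl _, fun i => le_refl _, ?_⟩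
    ext p
    show A.X.map _ ≫ (u.f.app _ ≫ v.f.app _) ≫ w.f.app p
      = A.X.map _ ≫ u.f.app _ ≫ v.f.app _ ≫ w.f.app p
    exact congrArg (A.X.map _ ≫ ·) (Category.assoc _ _ _)

def Ffun : (PiSet ⥤ 𝔄) ⥤ DObj 𝔄 where
  obj X := ⟨X⟩
  map {X Y} f := ⟦⟨id, inM_id, idTrans X ≫ f⟩⟧
  map_id X := by
    show Quotient.mk _ _ = Quotient.mk _ _
    rw [Category.comp_id]
  map_comp {X Y Z} f g := by
    refine Quotient.sound ⟨id, inM_id, fun i => le_refl _, fun i => le_refl _, ?_⟩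
    ext p
    show X.map _ ≫ X.map _ ≫ (f.app p ≫ g.app p)
      = X.map _ ≫ (X.map _ ≫ f.app ⟨p.a, p.b, p.le_ab⟩) ≫ (Y.map _ ≫ g.app p)
    have hn : Y.map (homOfLE (show (⟨p.a, p.b, p.le_ab⟩ : PiSet) ≤ p from
        ⟨le_refl _, le_refl _⟩)) = 𝟙 (Y.obj p) := map_self _ _
    rw [hn, Category.id_comp]
    simp only [Category.assoc]
    rfl

theorem exists_dominating {φ ψ : ℤ → ℤ} (hφ : inM φ) (hψ : inM ψ) :
    ∃ χ : ℤ → ℤ, inM χ ∧ (∀ i, i ≤ χ i) ∧ (∀ i, φ i ≤ ψ (χ i)) := by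
  have hbdd : ∀ i : ℤ, ∃ b, ∀ n, φ i ≤ ψ n → b ≤ n := by
    intro i
    obtain ⟨a, ha⟩ := Filter.eventually_atBot.mp (hψ.2.2.eventually_lt_atBot (φ i))
    refine ⟨a + 1, fun n hn => ?_⟩
    by_contra hc
    push_neg at hc
    exact absurd hn (not_le.mpr (ha n (by omega)))
  have hex : ∀ i : ℤ, ∃ n, φ i ≤ ψ n := fun i => (hψ.2.1.eventually_ge_atTop (φ i)).exists
  choose ρ hρ1 hρ2 using fun i => Int.exists_least_of_bdd (hbdd i) (hex i)
  have hmono : Monotone ρ := fun i j hij => hρ2 i (ρ j) ((hφ.1 hij).trans (hρ1 j))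
  refine ⟨fun i => max i (ρ i), ⟨monotone_id.max hmono,
    Filter.tendsto_atTop_mono (fun i => le_max_left _ _) Filter.tendsto_id, ?_⟩,
    fun i => le_max_left _ _, fun i => (hρ1 i).trans (hψ.1 (le_max_right _ _))⟩
  rw [Filter.tendsto_atBot]
  intro b
  filter_upwards [hφ.2.2.eventually_le_atBot (ψ b), Filter.eventually_le_atBot b] with i hi hi'
  exact max_le hi' (hρ2 i b hi)

def ginvHom (E : PiSet ⥤ 𝔄) (φ ψ χ : ℤ → ℤ) (hφ : Monotone φ) (hψ : Monotone ψ)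
    (hχ : Monotone χ) (h2 : ∀ i, φ i ≤ ψ (χ i)) :
    tilde χ hχ (tilde ψ hψ E) ⟶ tilde φ hφ E where
  app p := E.map (homOfLE (show (⟨ψ (χ p.a), ψ (χ p.b), hψ (hχ p.le_ab)⟩ : PiSet) ≤
    ⟨φ p.a, φ p.b, hφ p.le_ab⟩ from ⟨h2 p.a, h2 p.b⟩))
  naturality p q m := by
    dsimp [tilde]
    rw [← E.map_comp, ← E.map_comp]
    exact map_eqq _ _ _

theorem Ffun_inverts : (Scl (𝔄 := 𝔄)).IsInvertedBy (Ffun (𝔄 := 𝔄)) := by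
  rintro X Y s ⟨E, φ, ψ, hφ, hψ, h, rfl, rfl, rfl⟩
  simp only [eqToHom_refl, Category.id_comp, Category.comp_id]
  obtain ⟨χ, hχ, hχ1, hχ2⟩ := exists_dominating hφ hψ
  refine ⟨⟦⟨χ, hχ, ginvHom E φ ψ χ hφ.1 hψ.1 hχ.1 hχ2⟩⟧, ?_, ?_⟩
  · refine Quotient.sound ⟨χ, hχ, fun i => le_refl _, hχ1, ?_⟩
    ext p
    dsimp [Ffun, compPre, shiftHom, idTrans, toId, canMap, ginvHom, tilde]
    simp only [Functor.map_id, Category.id_comp, Category.comp_id, ← Functor.map_comp]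
    exact map_eqq _ _ _
  · refine Quotient.sound ⟨χ, hχ, fun i => le_refl _, hχ1, ?_⟩
    ext p
    dsimp [Ffun, compPre, shiftHom, idTrans, toId, canMap, ginvHom, tilde]
    simp only [Functor.map_id, Category.id_comp, Category.comp_id, ← Functor.map_comp]
    exact map_eqq _ _ _

theorem PP_of_Nsub {E : PiSet ⥤ 𝔄} (hE : Nsub E) : PP E := by
  have hzero : (Scl (𝔄 := 𝔄)).Q.map (𝟙 E) = (Scl (𝔄 := 𝔄)).Q.map (0 : E ⟶ E) :=
    hE.eq_of_src _ _
  have hfac : (Scl (𝔄 := 𝔄)).Q ⋙ Localization.Construction.lift (Ffun (𝔄 := 𝔄)) Ffun_inverts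
      = Ffun (𝔄 := 𝔄) := Localization.Construction.fac _ _
  have h2 : (Ffun (𝔄 := 𝔄)).map (𝟙 E) = (Ffun (𝔄 := 𝔄)).map (0 : E ⟶ E) := by
    have c1 := Functor.congr_hom hfac.symm (𝟙 E)
    have c2 := Functor.congr_hom hfac.symm (0 : E ⟶ E)
    rw [c1, c2]
    have c3 : ((Scl (𝔄 := 𝔄)).Q ⋙ Localization.Construction.lift (Ffun (𝔄 := 𝔄))
        Ffun_inverts).map (𝟙 E) = ((Scl (𝔄 := 𝔄)).Q ⋙ Localization.Construction.lift
        (Ffun (𝔄 := 𝔄)) Ffun_inverts).map (0 : E ⟶ E) :=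
      congrArg (Localization.Construction.lift (Ffun (𝔄 := 𝔄)) Ffun_inverts).map hzero
    rw [c3]
  have h4 : DRel (⟨id, inM_id, idTrans E ≫ 𝟙 E⟩ : DPre E E) ⟨id, inM_id, idTrans E ≫ 0⟩ :=
    Quotient.exact h2
  obtain ⟨χ, hχ, h₁, h₂x, e⟩ := h4
  refine ⟨χ, hχ, h₁, ?_⟩
  rw [Category.comp_id, comp_zero, comp_zero] at e
  ext p
  rw [zero_app]
  have hc := congr_app e p
  rw [zero_app] at hc
  dsimp [canMap, idTrans, toId] at hc ⊢
  erw [E.map_id, Category.comp_id] at hc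
  exact (map_eqq _ _ _).trans hc

/-- `N(𝔄)` is a Serre subcategory of `𝔄^Π`: it is closed under subobjects,
quotients, and extensions. -/
theorem Nsub_serre :
    (∀ (A B : PiSet ⥤ 𝔄) (f : A ⟶ B), Mono f → Nsub B → Nsub A) ∧
    (∀ (A B : PiSet ⥤ 𝔄) (f : A ⟶ B), Epi f → Nsub A → Nsub B) ∧
    (∀ (S : ShortComplex (PiSet ⥤ 𝔄)), S.ShortExact →
      Nsub S.X₁ → Nsub S.X₃ → Nsub S.X₂) := by
  refine ⟨fun A B f hf hB => Nsub_of_PP (PP_mono f hf (PP_of_Nsub hB)),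
    fun A B f hf hA => Nsub_of_PP (PP_epi f hf (PP_of_Nsub hA)),
    fun S hS h1 h3 => Nsub_of_PP (PP_ext S hS (PP_of_Nsub h1) (PP_of_Nsub h3))⟩
end

section
/- Let A be a commutative ℚ-algebra with derivation ∂ and t ∈ A× with ∂t = 1. Define the pairing ⟨·,·⟩: I^{a,b} × I^{-b,-a} → A by ⟨x(s)·t^s, g(s)·t^s⟩ := Res_{s=0}(x(s) g(-s)), where Res_{s=0} of a Laurent polynomial in s over A is the coefficient of s⁻¹. Then this pairing is well defined (independent of representatives) and non-degenerate: it induces an isomorphism I^{-b,-a} ≅ Hom_A(I^{a,b}, A). -/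
open LaurentPolynomial

variable {A : Type*} [CommRing A]

/-- The residue pairing `⟨x, g⟩ = Res_{s=0}(x(s) g(-s))`, the coefficient of `s⁻¹`
in `x(s)·g(-s)`: concretely `∑_k (-1)^{k+1} x_k g_{-1-k}`. -/
noncomputable def resPair (x g : LaurentPolynomial A) : A :=
  (AddMonoidAlgebra.coeff x).sum fun k c => ((Int.negOnePow (k + 1) : ℤˣ) : ℤ) • (c * AddMonoidAlgebra.coeff g (-1 - k))

/-- `s^c A[s]·t^s`: the `A`-submodule of `A[s,s⁻¹]·t^s` spanned by `s^k t^s`, `k ≥ c`. -/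
noncomputable def Ipow (c : ℤ) : Submodule A (LaurentPolynomial A) :=
  Submodule.span A ((fun k : ℤ => (T k : LaurentPolynomial A)) '' {k : ℤ | c ≤ k})

/-- The quotient `I^{a,b} = s^a A[s]·t^s / s^b A[s]·t^s`. -/
noncomputable abbrev Iab (A : Type*) [CommRing A] (a b : ℤ) :=
  ↥(Ipow (A := A) a) ⧸ (Ipow (A := A) b).comap (Ipow (A := A) a).subtype

/-! ### Auxiliary lemmas -/

lemma coeff_eq_zero_of_mem_Ipow {c : ℤ} {x : LaurentPolynomial A}
    (hx : x ∈ Ipow (A := A) c) {k : ℤ} (hk : k < c) : x.coeff k = 0 := by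
  induction hx using Submodule.span_induction with
  | mem y hy =>
    obtain ⟨m, hm, rfl⟩ := hy
    rw [LaurentPolynomial.T_apply, if_neg]
    rintro rfl; exact absurd hm (not_le.2 hk)
  | zero => simp
  | add y z _ _ hy hz => rw [AddMonoidAlgebra.coeff_add, Finsupp.add_apply, hy, hz, add_zero]
  | smul r y _ hy => rw [AddMonoidAlgebra.coeff_smul, Finsupp.smul_apply, hy, smul_zero]

lemma mem_Ipow_of {c : ℤ} {x : LaurentPolynomial A} (h : ∀ k < c, x.coeff k = 0) :
    x ∈ Ipow (A := A) c := by
  have hx : x = x.coeff.sum fun k v => v • (T k : LaurentPolynomial A) := by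
    apply AddMonoidAlgebra.coeff_injective
    rw [AddMonoidAlgebra.coeff_finsuppSum]
    conv_lhs => rw [← Finsupp.sum_single x.coeff]
    refine Finsupp.sum_congr fun k _ => ?_
    rw [AddMonoidAlgebra.coeff_smul, T, AddMonoidAlgebra.coeff_single, Finsupp.smul_single,
      smul_eq_mul, mul_one]
  rw [hx]
  refine Submodule.sum_mem _ fun k hk => Submodule.smul_mem _ _
    (Submodule.subset_span ⟨k, ?_, rfl⟩)
  by_contra hlt
  exact (Finsupp.mem_support_iff.mp hk) (h k (not_le.mp hlt))

/-- generic coefficient-extraction map with unit weights -/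
noncomputable def psi (c : ℤ) {n : ℕ} (u : Fin n → A) (j : Fin n → ℤ) :
    ↥(Ipow (A := A) c) →ₗ[A] (Fin n → A) where
  toFun x := fun i => u i * (x : LaurentPolynomial A).coeff (j i)
  map_add' x y := by
    funext i
    exact mul_add _ _ _
  map_smul' r x := by
    funext i
    show u i * (r * (x : LaurentPolynomial A).coeff (j i)) = r * (u i * (x : LaurentPolynomial A).coeff (j i))
    ring

lemma psi_surjective (c : ℤ) {n : ℕ} (u : Fin n → A) (j : Fin n → ℤ)
    (hu : ∀ i, u i * u i = 1) (hj : ∀ i, c ≤ j i) (hjinj : Function.Injective j) :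
    Function.Surjective (psi (A := A) c u j) := by
  intro v
  refine ⟨∑ i, (u i * v i) • ⟨T (j i), Submodule.subset_span ⟨j i, hj i, rfl⟩⟩, ?_⟩
  funext i
  simp only [psi, LinearMap.coe_mk, AddHom.coe_mk]
  have : ((∑ k, (u k * v k) • (⟨T (j k), Submodule.subset_span ⟨j k, hj k, rfl⟩⟩ :
      Ipow (A := A) c) : Ipow (A := A) c) : LaurentPolynomial A).coeff (j i)
      = ∑ k, (u k * v k) * (T (j k) : LaurentPolynomial A).coeff (j i) := by
    rw [Submodule.coe_sum, AddMonoidAlgebra.coeff_sum, Finsupp.finset_sum_apply]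
    exact Finset.sum_congr rfl fun k _ => by
      rw [Submodule.coe_smul, AddMonoidAlgebra.coeff_smul, Finsupp.smul_apply, smul_eq_mul]
  rw [this]
  rw [Finset.sum_eq_single i]
  · rw [LaurentPolynomial.T_apply, if_pos rfl, mul_one, ← mul_assoc, hu i, one_mul]
  · intro k _ hk
    rw [LaurentPolynomial.T_apply, if_neg (fun h => hk (hjinj h)), mul_zero]
  · intro h; exact absurd (Finset.mem_univ i) h

lemma psi_ker (c d : ℤ) {n : ℕ} (u : Fin n → A) (j : Fin n → ℤ)
    (hu : ∀ i, u i * u i = 1) (hjd : ∀ i, j i < d)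
    (hcov : ∀ k : ℤ, c ≤ k → k < d → ∃ i, j i = k) :
    (Ipow (A := A) d).comap (Ipow (A := A) c).subtype = LinearMap.ker (psi (A := A) c u j) := by
  ext x
  simp only [Submodule.mem_comap, Submodule.coe_subtype, LinearMap.mem_ker]
  constructor
  · intro hx
    funext i
    simp only [psi, LinearMap.coe_mk, AddHom.coe_mk, Pi.zero_apply]
    rw [coeff_eq_zero_of_mem_Ipow hx (hjd i), mul_zero]
  · intro hx
    refine mem_Ipow_of fun k hk => ?_
    by_cases hck : c ≤ k
    · obtain ⟨i, rfl⟩ := hcov k hck hk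
      have := congrFun hx i
      simp only [psi, LinearMap.coe_mk, AddHom.coe_mk, Pi.zero_apply] at this
      calc (x : LaurentPolynomial A).coeff (j i)
          = (u i * u i) * (x : LaurentPolynomial A).coeff (j i) := by rw [hu i, one_mul]
        _ = u i * (u i * (x : LaurentPolynomial A).coeff (j i)) := by ring
        _ = 0 := by rw [this, mul_zero]
    · exact coeff_eq_zero_of_mem_Ipow x.2 (not_le.mp hck)

noncomputable def pdF (n : ℕ) : (Fin n → A) →ₗ[A] ((Fin n → A) →ₗ[A] A) where
  toFun g := ∑ i, g i • LinearMap.proj i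
  map_add' g h := by simp [add_smul, Finset.sum_add_distrib]
  map_smul' r g := by simp [smul_smul, Finset.smul_sum]

lemma pdF_apply (n : ℕ) (g x : Fin n → A) : pdF n g x = ∑ i, g i * x i := by
  simp [pdF]

noncomputable def pdG (n : ℕ) : ((Fin n → A) →ₗ[A] A) →ₗ[A] (Fin n → A) :=
  LinearMap.pi fun i => LinearMap.applyₗ (Pi.single i 1)

lemma pdG_apply (n : ℕ) (φ : (Fin n → A) →ₗ[A] A) (i : Fin n) :
    pdG n φ i = φ (Pi.single i 1) := rfl

noncomputable def pairingDual (n : ℕ) : (Fin n → A) ≃ₗ[A] ((Fin n → A) →ₗ[A] A) :=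
  LinearEquiv.ofLinear (pdF n) (pdG n)
    (LinearMap.ext fun φ => LinearMap.ext fun x => by
      rw [LinearMap.comp_apply, LinearMap.id_apply, pdF_apply]
      calc ∑ i, pdG n φ i * x i = ∑ i, φ (Pi.single i (x i)) := by
            refine Finset.sum_congr rfl fun i _ => ?_
            rw [pdG_apply, mul_comm, ← smul_eq_mul, ← map_smul]
            congr 1
            rw [← Pi.single_smul, smul_eq_mul, mul_one]
        _ = φ x := by rw [← map_sum, Finset.univ_sum_single])
    (LinearMap.ext fun g => funext fun i => by
      rw [LinearMap.comp_apply, LinearMap.id_apply, pdG_apply, pdF_apply]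
      simp [Pi.single_apply, mul_ite, Finset.sum_ite_eq'])

lemma pairingDual_apply (n : ℕ) (g x : Fin n → A) :
    pairingDual n g x = ∑ i, g i * x i := pdF_apply n g x

lemma resPair_zero {c : ℤ} {x g : LaurentPolynomial A}
    (hx : x ∈ Ipow (A := A) c) (hg : g ∈ Ipow (A := A) (-c)) : resPair x g = 0 := by
  refine Finset.sum_eq_zero fun k hk => ?_
  have hkc : c ≤ k := by
    by_contra h
    exact (Finsupp.mem_support_iff.mp hk) (coeff_eq_zero_of_mem_Ipow hx (not_le.mp h))
  have : g.coeff (-1 - k) = 0 := coeff_eq_zero_of_mem_Ipow hg (by omega)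
  simp only [this, mul_zero, smul_zero]

lemma resPair_eq {a b : ℤ} {n : ℕ} (hn : (n : ℤ) = b - a) {x g : LaurentPolynomial A}
    (hx : x ∈ Ipow (A := A) a) (hg : g ∈ Ipow (A := A) (-b)) :
    resPair x g = ∑ i : Fin n,
      (((a + (i : ℤ) + 1).negOnePow : ℤ) : A) * (x.coeff (a + i) * g.coeff (-1 - (a + i))) := by
  classical
  have hjinj : Function.Injective fun i : Fin n => a + (i : ℤ) := by
    intro i k h
    simp only at h
    exact Fin.ext (by omega)
  set I : Finset ℤ := Finset.univ.map ⟨fun i : Fin n => a + (i : ℤ), hjinj⟩ with hI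
  have memI : ∀ k : ℤ, k ∈ I ↔ ∃ i : Fin n, a + (i : ℤ) = k := by
    intro k; simp [hI]
  have step1 : resPair x g =
      ∑ k ∈ x.coeff.support ∪ I, (((k + 1).negOnePow : ℤ) : A) * (x.coeff k * g.coeff (-1 - k)) := by
    rw [resPair]
    rw [Finsupp.sum]
    rw [Finset.sum_subset (Finset.subset_union_left)]
    · exact Finset.sum_congr rfl fun k _ => by rw [zsmul_eq_mul]
    · intro k _ hk
      rw [Finsupp.notMem_support_iff.mp hk, zero_mul, smul_zero]
  have step2 : ∑ k ∈ x.coeff.support ∪ I, (((k + 1).negOnePow : ℤ) : A) * (x.coeff k * g.coeff (-1 - k))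
      = ∑ k ∈ I, (((k + 1).negOnePow : ℤ) : A) * (x.coeff k * g.coeff (-1 - k)) := by
    refine (Finset.sum_subset Finset.subset_union_right ?_).symm
    intro k hk hkI
    rcases (Finset.mem_union.mp hk) with hs | hs
    swap
    · exact absurd hs hkI
    have hka : a ≤ k := by
      by_contra h
      exact (Finsupp.mem_support_iff.mp hs) (coeff_eq_zero_of_mem_Ipow hx (not_le.mp h))
    have hkb : b ≤ k := by
      by_contra h
      push_neg at h
      refine hkI ((memI k).mpr ⟨⟨(k - a).toNat, by omega⟩, ?_⟩)
      simp only []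
      omega
    have : g.coeff (-1 - k) = 0 := coeff_eq_zero_of_mem_Ipow hg (by omega)
    rw [this, mul_zero, mul_zero]
  rw [step1, step2, hI, Finset.sum_map]
  rfl

/-- The residue pairing `I^{a,b} × I^{-b,-a} → A` is well defined (it vanishes when
one argument lies in the respective sub-submodule) and non-degenerate: it induces
an isomorphism `I^{-b,-a} ≅ Hom_A(I^{a,b}, A)`. -/
theorem resPair_wellDefined_nondegenerate [Algebra ℚ A]
    (D : Derivation ℤ A A) (t : Aˣ) (ht : D (↑t : A) = 1) (a b : ℤ) (hab : a ≤ b) :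
    (∀ x ∈ Ipow (A := A) b, ∀ g ∈ Ipow (A := A) (-b), resPair x g = 0) ∧
    (∀ x ∈ Ipow (A := A) a, ∀ g ∈ Ipow (A := A) (-a), resPair x g = 0) ∧
    ∃ e : Iab A (-b) (-a) ≃ₗ[A] (Iab A a b →ₗ[A] A),
      ∀ (g : ↥(Ipow (A := A) (-b))) (x : ↥(Ipow (A := A) a)),
        e (Submodule.Quotient.mk g) (Submodule.Quotient.mk x) = resPair ↑x ↑g := by
  classical
  refine ⟨fun x hx g hg => resPair_zero hx hg, fun x hx g hg => resPair_zero hx hg, ?_⟩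
  set n : ℕ := (b - a).toNat with hn'
  have hn : (n : ℤ) = b - a := Int.toNat_of_nonneg (sub_nonneg.2 hab)
  set uX : Fin n → A := fun _ => (1 : A) with huX
  set jX : Fin n → ℤ := fun i => a + (i : ℤ) with hjX
  set uG : Fin n → A := fun i => (((a + (i : ℤ) + 1).negOnePow : ℤ) : A) with huG
  set jG : Fin n → ℤ := fun i => -1 - (a + (i : ℤ)) with hjG
  have huX1 : ∀ i, uX i * uX i = 1 := fun i => mul_one 1
  have huG1 : ∀ i, uG i * uG i = 1 := fun i => by
    rw [huG]
    rw [← Int.cast_mul, ← Units.val_mul, Int.units_mul_self, Units.val_one, Int.cast_one]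
  have hiLt : ∀ i : Fin n, (i : ℤ) < n := fun i => by exact_mod_cast i.isLt
  let qX : Iab A a b ≃ₗ[A] (Fin n → A) :=
    (Submodule.quotEquivOfEq _ _
      (psi_ker a b uX jX huX1 (fun i => by have := hiLt i; simp only [hjX]; omega)
        (fun k hk1 hk2 => ⟨⟨(k - a).toNat, by omega⟩, by simp only [hjX]; omega⟩))).trans
    ((psi a uX jX).quotKerEquivOfSurjective
      (psi_surjective a uX jX huX1 (fun i => by simp only [hjX]; omega)
        (fun i k h => Fin.ext (by simp only [hjX] at h; omega))))
  let qG : Iab A (-b) (-a) ≃ₗ[A] (Fin n → A) :=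
    (Submodule.quotEquivOfEq _ _
      (psi_ker (-b) (-a) uG jG huG1 (fun i => by have := hiLt i; simp only [hjG]; omega)
        (fun k hk1 hk2 => ⟨⟨(-1 - a - k).toNat, by omega⟩, by simp only [hjG]; omega⟩))).trans
    ((psi (-b) uG jG).quotKerEquivOfSurjective
      (psi_surjective (-b) uG jG huG1
        (fun i => by have := hiLt i; simp only [hjG]; omega)
        (fun i k h => Fin.ext (by simp only [hjG] at h; omega))))
  refine ⟨qG.trans ((pairingDual n).trans
    (LinearEquiv.arrowCongr qX.symm (LinearEquiv.refl A A))), fun g x => ?_⟩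
  have hqG : qG (Submodule.Quotient.mk g) = psi (-b) uG jG g := rfl
  have hqX : qX (Submodule.Quotient.mk x) = psi a uX jX x := rfl
  rw [LinearEquiv.trans_apply, LinearEquiv.trans_apply, hqG,
    LinearEquiv.arrowCongr_apply, LinearEquiv.symm_symm, hqX, LinearEquiv.refl_apply,
    pairingDual_apply, resPair_eq hn x.2 g.2]
  refine Finset.sum_congr rfl fun i _ => ?_
  simp only [psi, LinearMap.coe_mk, AddHom.coe_mk, huG, huX, hjG, hjX, one_mul]
  ring
end

section
/- In the setting of an abelian category 𝔄 and the exact functor lim↔: 𝔄^Π_a → lim↔ 𝔄, suppose one is given for each object E of an abelian category ℋ two exact functors j_!, j_+ : ℋ → 𝒜 into an abelian category 𝒜, a natural transformation j_! → j_+, and for fixed integers a ≤ b an object Π^{a,b}(E) defined as a quotient Q_+/im(Q_!) fitting in exact sequences 0 → j_!(E)(i) → Ξ^{(i)}(E) → Ψ^{(i)}(E) → 0 and 0 → Ψ^{(i+1)}(E) → Ξ^{(i)}(E) → j_+(E)(i) → 0 where (i) denotes an exact twist autoequivalence of 𝒜. Then the functor Φ(M) for M ∈ 𝒜 with M_Y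 := j^+(M), defined as the middle cohomology of j_! M_Y →^{(α_-, γ_-)} Ξ(M_Y) ⊕ M →^{(α_+, -γ_+)} j_+ M_Y, is exact, provided α_- is injective, α_+ is surjective, j^+, j_!, j_+, Ξ are exact, and the composites satisfy α_+ ∘ α_- = γ_+ ∘ γ_- as maps j_! M_Y → j_+ M_Y. -/
open CategoryTheory CategoryTheory.Limits

variable {𝒜 ℋ : Type*} [Category 𝒜] [Category ℋ] [Abelian 𝒜] [Abelian ℋ]

variable (jl jp : ℋ ⥤ 𝒜) (ju : 𝒜 ⥤ ℋ) (Xi : ℋ ⥤ 𝒜)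
  (αm : jl ⟶ Xi) (αp : Xi ⟶ jp)
  (γm : ju ⋙ jl ⟶ 𝟭 𝒜) (γp : 𝟭 𝒜 ⟶ ju ⋙ jp)

/-- The three-term complex `j_! j⁺M → Ξ(j⁺M) ⊕ M → j_+ j⁺M` defining the
vanishing cycles functor `Φ`. -/
noncomputable def phiCplx
    (hw : ∀ M : 𝒜, αm.app (ju.obj M) ≫ αp.app (ju.obj M) = γm.app M ≫ γp.app M)
    (M : 𝒜) : ShortComplex 𝒜 where
  X₁ := jl.obj (ju.obj M)
  X₂ := Xi.obj (ju.obj M) ⊞ M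
  X₃ := jp.obj (ju.obj M)
  f := biprod.lift (αm.app (ju.obj M)) (γm.app M)
  g := biprod.desc (αp.app (ju.obj M)) (-γp.app M)
  zero := by
    simp only [biprod.lift_desc, Preadditive.comp_neg, hw M]
    exact add_neg_cancel _

/-- `Φ(M)`: the middle cohomology of `j_! j⁺M → Ξ(j⁺M) ⊕ M → j_+ j⁺M`. -/
noncomputable def phiObj
    (hw : ∀ M : 𝒜, αm.app (ju.obj M) ≫ αp.app (ju.obj M) = γm.app M ≫ γp.app M)
    (M : 𝒜) : 𝒜 :=
  (phiCplx jl jp ju Xi αm αp γm γp hw M).homology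

/-- The morphism of defining complexes induced by `f : M ⟶ M'`. -/
noncomputable def phiCplxMap
    (hw : ∀ M : 𝒜, αm.app (ju.obj M) ≫ αp.app (ju.obj M) = γm.app M ≫ γp.app M)
    {M M' : 𝒜} (f : M ⟶ M') :
    phiCplx jl jp ju Xi αm αp γm γp hw M ⟶ phiCplx jl jp ju Xi αm αp γm γp hw M' where
  τ₁ := jl.map (ju.map f)
  τ₂ := biprod.map (Xi.map (ju.map f)) f
  τ₃ := jp.map (ju.map f)
  comm₁₂ := by
    dsimp [phiCplx]
    apply biprod.hom_ext
    · simp [← αm.naturality (ju.map f)]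
    · have := γm.naturality f
      dsimp at this
      simp [← this]
  comm₂₃ := by
    dsimp [phiCplx]
    apply biprod.hom_ext'
    · simp [αp.naturality (ju.map f)]
    · have := γp.naturality f
      dsimp at this
      simp [this]

/-- `Φ` applied to a morphism. -/
noncomputable def phiMap
    (hw : ∀ M : 𝒜, αm.app (ju.obj M) ≫ αp.app (ju.obj M) = γm.app M ≫ γp.app M)
    {M M' : 𝒜} (f : M ⟶ M') :
    phiObj jl jp ju Xi αm αp γm γp hw M ⟶ phiObj jl jp ju Xi αm αp γm γp hw M' :=
  ShortComplex.homologyMap (phiCplxMap jl jp ju Xi αm αp γm γp hw f)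

open ZeroObject

lemma phiCplx_mono_f_aux
    (hmono : ∀ X : ℋ, Mono (αm.app X))
    (hw : ∀ M : 𝒜, αm.app (ju.obj M) ≫ αp.app (ju.obj M) = γm.app M ≫ γp.app M)
    (M : 𝒜) : Mono (phiCplx jl jp ju Xi αm αp γm γp hw M).f := by
  have := hmono (ju.obj M)
  exact (mono_of_mono_fac (biprod.lift_fst (αm.app (ju.obj M)) (γm.app M)) :)

lemma phiCplx_epi_g_aux
    (hepi : ∀ X : ℋ, Epi (αp.app X))
    (hw : ∀ M : 𝒜, αm.app (ju.obj M) ≫ αp.app (ju.obj M) = γm.app M ≫ γp.app M)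
    (M : 𝒜) : Epi (phiCplx jl jp ju Xi αm αp γm γp hw M).g := by
  have := hepi (ju.obj M)
  exact (epi_of_epi_fac (biprod.inl_desc (αp.app (ju.obj M)) (-γp.app M)) :)

/-- The vanishing cycles functor `Φ` is exact: if the constituent functors are
exact, `α₋` is (pointwise) injective, `α₊` is (pointwise) surjective, and
`α₊ ∘ α₋ = γ₊ ∘ γ₋`, then `Φ` carries short exact sequences to short exact
sequences. -/
theorem phi_exact
    [PreservesFiniteLimits jl] [PreservesFiniteColimits jl]
    [PreservesFiniteLimits jp] [PreservesFiniteColimits jp]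
    [PreservesFiniteLimits ju] [PreservesFiniteColimits ju]
    [PreservesFiniteLimits Xi] [PreservesFiniteColimits Xi]
    (hmono : ∀ X : ℋ, Mono (αm.app X)) (hepi : ∀ X : ℋ, Epi (αp.app X))
    (hw : ∀ M : 𝒜, αm.app (ju.obj M) ≫ αp.app (ju.obj M) = γm.app M ≫ γp.app M)
    (S : ShortComplex 𝒜) (hS : S.ShortExact) :
    ∃ w : phiMap jl jp ju Xi αm αp γm γp hw S.f ≫
        phiMap jl jp ju Xi αm αp γm γp hw S.g = 0,
      (ShortComplex.mk _ _ w).ShortExact := by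
  haveI := hS.mono_f
  haveI := hS.epi_g
  haveI := comp_preservesFiniteLimits ju jl
  haveI := comp_preservesFiniteColimits ju jl
  haveI := comp_preservesFiniteLimits ju jp
  haveI := comp_preservesFiniteColimits ju jp
  haveI := comp_preservesFiniteLimits ju Xi
  haveI := comp_preservesFiniteColimits ju Xi
  set A := phiCplx jl jp ju Xi αm αp γm γp hw S.X₁ with hA
  set B := phiCplx jl jp ju Xi αm αp γm γp hw S.X₂ with hB
  set Cc := phiCplx jl jp ju Xi αm αp γm γp hw S.X₃ with hC
  set u := phiCplxMap jl jp ju Xi αm αp γm γp hw S.f with hu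
  set v := phiCplxMap jl jp ju Xi αm αp γm γp hw S.g with hv
  -- mono/epi of the structural maps of the three complexes
  haveI : Mono A.f := phiCplx_mono_f_aux jl jp ju Xi αm αp γm γp hmono hw S.X₁
  haveI : Mono B.f := phiCplx_mono_f_aux jl jp ju Xi αm αp γm γp hmono hw S.X₂
  haveI : Mono Cc.f := phiCplx_mono_f_aux jl jp ju Xi αm αp γm γp hmono hw S.X₃
  haveI hgA : Epi A.g := phiCplx_epi_g_aux jl jp ju Xi αm αp γm γp hepi hw S.X₁
  haveI hgB : Epi B.g := phiCplx_epi_g_aux jl jp ju Xi αm αp γm γp hepi hw S.X₂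
  haveI hgC : Epi Cc.g := phiCplx_epi_g_aux jl jp ju Xi αm αp γm γp hepi hw S.X₃
  -- component identities
  have huτ₂ : u.τ₂ = biprod.map (Xi.map (ju.map S.f)) S.f := rfl
  have hvτ₂ : v.τ₂ = biprod.map (Xi.map (ju.map S.g)) S.g := rfl
  -- mono/epi of the middle components
  haveI : Mono (Xi.map (ju.map S.f)) :=
    show Mono ((ju ⋙ Xi).map S.f) from preserves_mono_of_preservesLimit _ _
  haveI : Epi (Xi.map (ju.map S.g)) :=
    show Epi ((ju ⋙ Xi).map S.g) from preserves_epi_of_preservesColimit _ _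
  haveI hmUτ₂ : Mono u.τ₂ := by rw [huτ₂]; exact (biprod.map_mono (Xi.map (ju.map S.f)) S.f :)
  haveI hEpiVτ₂ : Epi v.τ₂ := by rw [hvτ₂]; exact (biprod.map_epi (Xi.map (ju.map S.g)) S.g :)
  -- the rows
  have hτ₂0 : u.τ₂ ≫ v.τ₂ = 0 := by
    have h1 : Xi.map (ju.map S.f) ≫ Xi.map (ju.map S.g) = 0 := by
      rw [← Functor.map_comp, ← Functor.map_comp, S.zero, Functor.map_zero, Functor.map_zero]
    rw [huτ₂, hvτ₂]
    show biprod.map _ _ ≫ biprod.map _ _ = (0 : _ ⟶ Xi.obj (ju.obj S.X₃) ⊞ S.X₃)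
    apply biprod.hom_ext
    · simp [h1]
    · simp [S.zero]
  have hRow₁ : (S.map (ju ⋙ jl)).ShortExact := hS.map_of_exact _
  have hRow₃ : (S.map (ju ⋙ jp)).ShortExact := hS.map_of_exact _
  have hRowXi : (S.map (ju ⋙ Xi)).ShortExact := hS.map_of_exact _
  let Row₂ : ShortComplex 𝒜 := ShortComplex.mk u.τ₂ v.τ₂ hτ₂0
  have hRow₂exact : Row₂.Exact := by
    rw [ShortComplex.exact_iff_exact_up_to_refinements]
    intro T x₂ hx₂
    change T ⟶ Xi.obj (ju.obj S.X₂) ⊞ S.X₂ at x₂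
    have hx₂' : x₂ ≫ biprod.map (Xi.map (ju.map S.g)) S.g = 0 := by
      rw [← hvτ₂]; exact hx₂
    obtain ⟨T₁, p₁, hp₁, y₁, hy₁⟩ := hRowXi.exact.exact_up_to_refinements
      (x₂ ≫ biprod.fst) (by
        refine (Category.assoc _ _ _).trans ?_
        show x₂ ≫ biprod.fst ≫ Xi.map (ju.map S.g) = 0
        rw [← biprod.map_fst (Xi.map (ju.map S.g)) S.g, ← Category.assoc, hx₂', zero_comp])
    change T₁ ⟶ Xi.obj (ju.obj S.X₁) at y₁
    obtain ⟨T₂, p₂, hp₂, y₂, hy₂⟩ := hS.exact.exact_up_to_refinements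
      ((p₁ ≫ x₂) ≫ biprod.snd) (by
        refine (Category.assoc _ _ _).trans ?_
        show (p₁ ≫ x₂) ≫ biprod.snd ≫ S.g = 0
        rw [← biprod.map_snd (Xi.map (ju.map S.g)) S.g, ← Category.assoc,
          Category.assoc p₁ x₂ _, hx₂', comp_zero, zero_comp])
    refine ⟨T₂, p₂ ≫ p₁, epi_comp _ _, biprod.lift (p₂ ≫ y₁) y₂, ?_⟩
    have hy₁' : p₁ ≫ x₂ ≫ biprod.fst = y₁ ≫ Xi.map (ju.map S.f) := hy₁
    have hy₂' : p₂ ≫ (p₁ ≫ x₂) ≫ biprod.snd = y₂ ≫ S.f := hy₂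
    have hfτ₂ : Row₂.f = biprod.map (Xi.map (ju.map S.f)) S.f := rfl
    show (p₂ ≫ p₁) ≫ x₂ = biprod.lift (p₂ ≫ y₁) y₂ ≫ biprod.map (Xi.map (ju.map S.f)) S.f
    apply biprod.hom_ext
    · simp only [Category.assoc, biprod.map_fst, biprod.lift_fst_assoc]
      rw [← hy₁']
    · simp only [Category.assoc, biprod.map_snd, biprod.lift_snd_assoc]
      simp only [Category.assoc] at hy₂'
      exact hy₂'
  -- the cycles row
  have hcyc0 : ShortComplex.cyclesMap u ≫ ShortComplex.cyclesMap v = 0 := by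
    rw [← cancel_mono Cc.iCycles]
    rw [Category.assoc, ShortComplex.cyclesMap_i v, ShortComplex.cyclesMap_i_assoc, hτ₂0, comp_zero, zero_comp]
  let CycRow : ShortComplex 𝒜 :=
    ShortComplex.mk (ShortComplex.cyclesMap u) (ShortComplex.cyclesMap v) hcyc0
  let Z : ShortComplex 𝒜 := ShortComplex.mk (0 : (0 : 𝒜) ⟶ 0) (0 : (0 : 𝒜) ⟶ 0) (by simp)
  -- first snake input: rows X₂ and X₃, kernels = cycles, cokernels = 0
  let kA : ShortComplex.SnakeInput 𝒜 :=
    { L₀ := CycRow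
      L₁ := Row₂
      L₂ := S.map (ju ⋙ jp)
      L₃ := Z
      v₀₁ :=
        { τ₁ := A.iCycles
          τ₂ := B.iCycles
          τ₃ := Cc.iCycles
          comm₁₂ := (ShortComplex.cyclesMap_i u).symm
          comm₂₃ := (ShortComplex.cyclesMap_i v).symm }
      v₁₂ :=
        { τ₁ := A.g
          τ₂ := B.g
          τ₃ := Cc.g
          comm₁₂ := u.comm₂₃.symm
          comm₂₃ := v.comm₂₃.symm }
      v₂₃ := 0
      w₀₂ := by ext <;> simp <;> exact ShortComplex.iCycles_g _
      w₁₃ := comp_zero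
      h₀ := ShortComplex.isLimitOfIsLimitπ _
        ((isLimitMapConeForkEquiv' ShortComplex.π₁ _).symm A.cyclesIsKernel)
        ((isLimitMapConeForkEquiv' ShortComplex.π₂ _).symm B.cyclesIsKernel)
        ((isLimitMapConeForkEquiv' ShortComplex.π₃ _).symm Cc.cyclesIsKernel)
      h₃ := ShortComplex.isColimitOfIsColimitπ _
        ((isColimitMapCoconeCoforkEquiv' ShortComplex.π₁ _).symm
          (CokernelCofork.IsColimit.ofEpiOfIsZero _ hgA (isZero_zero 𝒜)))
        ((isColimitMapCoconeCoforkEquiv' ShortComplex.π₂ _).symm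
          (CokernelCofork.IsColimit.ofEpiOfIsZero _ hgB (isZero_zero 𝒜)))
        ((isColimitMapCoconeCoforkEquiv' ShortComplex.π₃ _).symm
          (CokernelCofork.IsColimit.ofEpiOfIsZero _ hgC (isZero_zero 𝒜)))
      L₁_exact := hRow₂exact
      epi_L₁_g := hEpiVτ₂
      L₂_exact := hRow₃.exact
      mono_L₂_f := hRow₃.mono_f }
  have hCycExact : CycRow.Exact := kA.L₀_exact
  have hepiCyc : Epi (ShortComplex.cyclesMap v) :=
    (ShortComplex.exact_iff_epi kA.L₁' ((isZero_zero 𝒜).eq_of_tgt _ _)).1 kA.L₁'_exact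
  -- mono of cyclesMap u
  haveI hmonoCycU : Mono (ShortComplex.cyclesMap u) := by
    haveI : Mono (ShortComplex.cyclesMap u ≫ B.iCycles) := by
      rw [ShortComplex.cyclesMap_i]; exact mono_comp _ _
    exact mono_of_mono _ B.iCycles
  haveI hmonoToA : Mono A.toCycles := by
    haveI : Mono (A.toCycles ≫ A.iCycles) := by
      rw [ShortComplex.toCycles_i]; infer_instance
    exact mono_of_mono _ A.iCycles
  haveI hmonoToB : Mono B.toCycles := by
    haveI : Mono (B.toCycles ≫ B.iCycles) := by
      rw [ShortComplex.toCycles_i]; infer_instance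
    exact mono_of_mono _ B.iCycles
  haveI hmonoToC : Mono Cc.toCycles := by
    haveI : Mono (Cc.toCycles ≫ Cc.iCycles) := by
      rw [ShortComplex.toCycles_i]; infer_instance
    exact mono_of_mono _ Cc.iCycles
  -- the homology row
  have hhom0 : ShortComplex.homologyMap u ≫ ShortComplex.homologyMap v = 0 := by
    rw [← cancel_epi A.homologyπ, ShortComplex.homologyπ_naturality_assoc,
      ShortComplex.homologyπ_naturality, ← Category.assoc, hcyc0, zero_comp, comp_zero]
  -- second snake input: rows X₁ and cycles, cokernels = homology
  let kB : ShortComplex.SnakeInput 𝒜 :=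
    { L₀ := Z
      L₁ := S.map (ju ⋙ jl)
      L₂ := CycRow
      L₃ := ShortComplex.mk (ShortComplex.homologyMap u) (ShortComplex.homologyMap v) hhom0
      v₀₁ := 0
      v₁₂ :=
        { τ₁ := A.toCycles
          τ₂ := B.toCycles
          τ₃ := Cc.toCycles
          comm₁₂ := ShortComplex.toCycles_naturality u
          comm₂₃ := ShortComplex.toCycles_naturality v }
      v₂₃ :=
        { τ₁ := A.homologyπ
          τ₂ := B.homologyπ
          τ₃ := Cc.homologyπ
          comm₁₂ := ShortComplex.homologyπ_naturality u
          comm₂₃ := ShortComplex.homologyπ_naturality v }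
      w₀₂ := zero_comp
      w₁₃ := by ext <;> simp <;> exact ShortComplex.toCycles_comp_homologyπ _
      h₀ := ShortComplex.isLimitOfIsLimitπ _
        ((isLimitMapConeForkEquiv' ShortComplex.π₁ _).symm
          (KernelFork.IsLimit.ofMonoOfIsZero _ hmonoToA (isZero_zero 𝒜)))
        ((isLimitMapConeForkEquiv' ShortComplex.π₂ _).symm
          (KernelFork.IsLimit.ofMonoOfIsZero _ hmonoToB (isZero_zero 𝒜)))
        ((isLimitMapConeForkEquiv' ShortComplex.π₃ _).symm
          (KernelFork.IsLimit.ofMonoOfIsZero _ hmonoToC (isZero_zero 𝒜)))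
      h₃ := ShortComplex.isColimitOfIsColimitπ _
        ((isColimitMapCoconeCoforkEquiv' ShortComplex.π₁ _).symm A.homologyIsCokernel)
        ((isColimitMapCoconeCoforkEquiv' ShortComplex.π₂ _).symm B.homologyIsCokernel)
        ((isColimitMapCoconeCoforkEquiv' ShortComplex.π₃ _).symm Cc.homologyIsCokernel)
      L₁_exact := hRow₁.exact
      epi_L₁_g := hRow₁.epi_g
      L₂_exact := hCycExact
      mono_L₂_f := hmonoCycU }
  have hmonoH : Mono (ShortComplex.homologyMap u) :=
    (ShortComplex.exact_iff_mono kB.L₂' ((isZero_zero 𝒜).eq_of_src _ _)).1 kB.L₂'_exact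
  have hepiH : Epi (ShortComplex.homologyMap v) := by
    haveI : Epi kB.L₂.g := hepiCyc
    exact kB.epi_L₃_g
  have hExact : (ShortComplex.mk (ShortComplex.homologyMap u)
      (ShortComplex.homologyMap v) hhom0).Exact := kB.L₃_exact
  exact ⟨hhom0, { exact := hExact, mono_f := hmonoH, epi_g := hepiH }⟩
end
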